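/- Let A, B ∈ ℤ with B ≥ 2. Then every complex root λ of the polynomial x² + A·x + B satisfies |λ| > 1 if and only if |A| ≤ B. (Equivalently: a 2×2 integer matrix with characteristic polynomial x² + A·x + B and determinant B ≥ 2 is expanding if and only if |A| ≤ B.) -/

import Mathlib

/-- For integers `A, B` with `B ≥ 2`, every complex root of
`x² + A·x + B` has modulus `> 1` if and only if `|A| ≤ B`. -/
theorem quadratic_expanding_iff
    (A B : ℤ) (hB : 2 ≤ B) :
    (∀ z : ℂ, z ^ 2 + (A : ℂ) * z + (B : ℂ) = 0 → 1 < ‖z‖) ↔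
      |A| ≤ B := by
  have hBR : (2:ℝ) ≤ (B:ℝ) := by exact_mod_cast hB
  constructor
  · intro h
    by_contra hA
    push_neg at hA
    -- B < |A|
    have hroot : ∃ t : ℝ, t^2 + (A:ℝ)*t + (B:ℝ) = 0 ∧ |t| ≤ 1 := by
      have hcont : ContinuousOn (fun t : ℝ => t^2 + (A:ℝ)*t + (B:ℝ)) (Set.Icc (-1) 0) := by
        fun_prop
      have hcont' : ContinuousOn (fun t : ℝ => t^2 + (A:ℝ)*t + (B:ℝ)) (Set.Icc 0 1) := by
        fun_prop
      rcases le_or_gt 0 A with h0 | h0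
      · -- A ≥ B+1 > 0, root in [-1,0]
        have hAB : (B:ℝ) + 1 ≤ (A:ℝ) := by
          have : B + 1 ≤ A := by
            rw [abs_of_nonneg h0] at hA; omega
          exact_mod_cast this
        have hmem : (0:ℝ) ∈ Set.Icc ((-1:ℝ)^2 + (A:ℝ)*(-1) + B) ((0:ℝ)^2 + (A:ℝ)*0 + B) := by
          constructor <;> nlinarith
        obtain ⟨t, ht, hft⟩ := intermediate_value_Icc (by norm_num) hcont hmem
        exact ⟨t, hft, abs_le.mpr ⟨by linarith [ht.1], by linarith [ht.2]⟩⟩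
      · -- A ≤ -(B+1), root in [0,1]
        have hAB : (A:ℝ) ≤ -((B:ℝ) + 1) := by
          have : A ≤ -(B + 1) := by
            rw [abs_of_neg h0] at hA; omega
          exact_mod_cast this
        have hmem : (0:ℝ) ∈ Set.Icc ((1:ℝ)^2 + (A:ℝ)*1 + B) ((0:ℝ)^2 + (A:ℝ)*0 + B) := by
          constructor <;> nlinarith
        obtain ⟨t, ht, hft⟩ := intermediate_value_Icc' (by norm_num) hcont' hmem
        exact ⟨t, hft, abs_le.mpr ⟨by linarith [ht.1], by linarith [ht.2]⟩⟩
    obtain ⟨t, ht, ht1⟩ := hroot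
    have hz : (t:ℂ)^2 + (A:ℂ)*(t:ℂ) + (B:ℂ) = 0 := by exact_mod_cast congrArg (Complex.ofReal) ht
    have := h t hz
    rw [Complex.norm_real, Real.norm_eq_abs] at this
    linarith
  · intro hA z hz
    by_contra hle
    push_neg at hle
    have hAR : |(A:ℝ)| ≤ (B:ℝ) := by exact_mod_cast (by exact_mod_cast hA : |(A:ℤ)| ≤ B)
    set x := z.re with hx
    set y := z.im with hy
    have hsq : x^2 + y^2 ≤ 1 := by
      have h1 := Complex.sq_norm z
      have h2 := Complex.normSq_apply z
      nlinarith [norm_nonneg z]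
    have hre : x^2 - y^2 + (A:ℝ)*x + (B:ℝ) = 0 := by
      have := congrArg Complex.re hz
      simp [pow_two, Complex.mul_re] at this
      linarith [this]
    have him : 2*x*y + (A:ℝ)*y = 0 := by
      have := congrArg Complex.im hz
      simp [pow_two, Complex.mul_im] at this
      linarith [this]
    rcases eq_or_ne y 0 with hy0 | hy0
    · -- real root
      rw [hy0] at hre hsq
      have heq : x^2 + (A:ℝ)*x + (B:ℝ) = 0 := by linarith [hre]
      have h1 : -(B:ℝ) ≤ (A:ℝ) := by cases abs_le.mp hAR; linarith
      have h2 : (A:ℝ) ≤ (B:ℝ) := (abs_le.mp hAR).2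
      have hx1 : x^2 ≤ 1 := by linarith
      nlinarith [sq_nonneg (x+1), sq_nonneg (x-1), sq_nonneg ((A:ℝ)+x+1), sq_nonneg ((A:ℝ)+x-1), mul_self_nonneg (1-x), mul_self_nonneg (1+x)]
    · -- complex root: A = -2x, B = x²+y²
      have hA2 : (A:ℝ) = -2*x := by
        have : y * (2*x + (A:ℝ)) = 0 := by ring_nf; linarith [him]
        rcases mul_eq_zero.mp this with h | h
        · exact absurd h hy0
        · linarith
      rw [hA2] at hre
      nlinarith [sq_nonneg y, sq_nonneg x]
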